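/- Fix an integer c ≥ 1, ε > 0, η > 0, l ≥ 1, and thresholds T₁, …, T_l ∈ ℝ. Let Z_α have the Laplace distribution with scale 2ηc/ε and let Z₁, …, Z_l be i.i.d. with the Laplace distribution with scale 4ηc/ε, all mutually independent. For a vector q ∈ ℝ^l, let E(q) denote the event that q_i + Z_i > T_i + Z_α for every i < l and q_l + Z_l ≤ T_l + Z_α. Then for any two vectors q, q′ ∈ ℝ^l with |q_i − q′_i| ≤ η for every i, it holds that P(E(q)) ≤ exp(ε/c)·P(E(q′)). -/

import Mathlib

open MeasureTheory ProbabilityTheory Real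
open scoped ENNReal

/-- A real random variable `Z` has the Laplace distribution with scale `b > 0` (with respect to
the probability measure `P`) if it is measurable and its law has density
`x ↦ (1/(2b)) · exp(−|x|/b)` with respect to Lebesgue measure. -/
def HasLaplaceLaw {Ω : Type*} [MeasurableSpace Ω] (P : Measure Ω) (Z : Ω → ℝ) (b : ℝ) : Prop :=
  Measurable Z ∧
    P.map Z = volume.withDensity (fun x => ENNReal.ofReal ((1 / (2 * b)) * Real.exp (-|x| / b)))

/-- The single-epoch event of the sparse-vector mechanism with (data-independent) thresholds
`T₁, …, T_l` and below-threshold crossings: all queries before the last stay above their noisy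
threshold, and the last query falls below its noisy threshold. -/
def svEpochEvent {Ω : Type*} (l : ℕ) (T : Fin l → ℝ) (Z : Fin l → Ω → ℝ) (Zα : Ω → ℝ)
    (hl : 1 ≤ l) (q : Fin l → ℝ) : Set Ω :=
  {ω | (∀ i : Fin l, (i : ℕ) < l - 1 → q i + Z i ω > T i + Zα ω) ∧
    q ⟨l - 1, by omega⟩ + Z ⟨l - 1, by omega⟩ ω ≤ T ⟨l - 1, by omega⟩ + Zα ω}

/-- The Laplace density with scale `b`, valued in `ℝ≥0∞`. -/
noncomputable def laplaceDensity (b x : ℝ) : ℝ≥0∞ :=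
  ENNReal.ofReal ((1 / (2 * b)) * Real.exp (-|x| / b))

lemma laplaceDensity_measurable (b : ℝ) : Measurable (laplaceDensity b) :=
  ENNReal.measurable_ofReal.comp (by fun_prop)

/-- Pointwise quasi-invariance of the Laplace density under shifts. -/
lemma laplaceDensity_shift (b : ℝ) (hb : 0 < b) (t s x : ℝ) (hts : |t| ≤ s) :
    laplaceDensity b (x - t) ≤ ENNReal.ofReal (Real.exp (s / b)) * laplaceDensity b x := by
  unfold laplaceDensity
  rw [← ENNReal.ofReal_mul (Real.exp_nonneg _)]
  apply ENNReal.ofReal_le_ofReal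
  rw [mul_left_comm, ← Real.exp_add]
  apply mul_le_mul_of_nonneg_left _ (by positivity)
  apply Real.exp_le_exp.2
  rw [← add_div, div_le_div_iff_of_pos_right hb]
  have := abs_sub_abs_le_abs_sub x (x - t)
  simp only [sub_sub_cancel] at this
  linarith

/-- Tonelli for a finite product of functions over a finite product measure. -/
lemma lintegral_pi_prod : ∀ (n : ℕ) (μ : Fin n → Measure ℝ), (∀ i, SigmaFinite (μ i)) →
    ∀ (f : Fin n → ℝ → ℝ≥0∞), (∀ i, Measurable (f i)) →
    ∫⁻ x, ∏ i, f i (x i) ∂(Measure.pi μ) = ∏ i, ∫⁻ t, f i t ∂(μ i) := by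
  intro n
  induction n with
  | zero =>
    intro μ _ f _
    simp only [Finset.univ_eq_empty, Finset.prod_empty]
    have : Measure.pi μ Set.univ = 1 := by
      rw [Measure.pi_univ]; simp
    simp [lintegral_const, this]
  | succ n ih =>
    intro μ hμ f hf
    haveI := hμ
    have hmp := MeasureTheory.measurePreserving_piFinSuccAbove μ 0
    have hmeas : Measurable fun p : ℝ × (Fin n → ℝ) =>
        f 0 p.1 * ∏ i : Fin n, f ((0 : Fin (n + 1)).succAbove i) (p.2 i) := by
      refine ((hf 0).comp measurable_fst).mul ?_
      exact Finset.measurable_prod _ fun i _ =>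
        (hf _).comp ((measurable_pi_apply i).comp measurable_snd)
    calc ∫⁻ x, ∏ i, f i (x i) ∂(Measure.pi μ)
        = ∫⁻ p, f 0 p.1 * ∏ i : Fin n, f ((0 : Fin (n + 1)).succAbove i) (p.2 i)
            ∂((μ 0).prod (Measure.pi fun i => μ ((0 : Fin (n + 1)).succAbove i))) := by
          rw [← hmp.lintegral_comp hmeas]
          refine lintegral_congr fun x => ?_
          simp only [MeasurableEquiv.piFinSuccAbove_apply]
          rw [Fin.prod_univ_succ]
          congr 1
      _ = (∫⁻ t, f 0 t ∂(μ 0)) * ∏ i : Fin n,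
            ∫⁻ t, f ((0 : Fin (n + 1)).succAbove i) t ∂(μ ((0 : Fin (n + 1)).succAbove i)) := by
          rw [show (∫⁻ p : ℝ × (Fin n → ℝ),
              f 0 p.1 * ∏ i : Fin n, f ((0 : Fin (n + 1)).succAbove i) (p.2 i)
              ∂((μ 0).prod (Measure.pi fun i => μ ((0 : Fin (n + 1)).succAbove i))))
              = (∫⁻ t, f 0 t ∂(μ 0)) *
                ∫⁻ y, ∏ i : Fin n, f ((0 : Fin (n + 1)).succAbove i) (y i)
                ∂(Measure.pi fun i => μ ((0 : Fin (n + 1)).succAbove i)) from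
            lintegral_prod_mul ((hf 0).aemeasurable)
              (Finset.measurable_prod _ fun i _ => (hf _).comp (measurable_pi_apply i)).aemeasurable]
          congr 1
          exact ih _ (fun i => inferInstance) _ (fun i => hf _)
      _ = ∏ i, ∫⁻ t, f i t ∂(μ i) := by
          rw [Fin.prod_univ_succ]
          congr 1

/-- Pushing a `withDensity` measure over Lebesgue measure forward by a translation. -/
lemma withDensity_map_add (f : ℝ → ℝ≥0∞) (hf : Measurable f) (t : ℝ) :
    (volume.withDensity f).map (· + t) = volume.withDensity (fun x => f (x - t)) := by
  ext A hA
  rw [Measure.map_apply (measurable_add_const t) hA,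
    withDensity_apply _ (hA.preimage (measurable_add_const t)), withDensity_apply _ hA]
  have h1 : ∫⁻ x in (· + t) ⁻¹' A, f x = ∫⁻ x, A.indicator (fun y => f (y - t)) (x + t) := by
    rw [← lintegral_indicator (hA.preimage (measurable_add_const t)) _]
    refine lintegral_congr fun x => ?_
    simp only [Set.indicator, Set.mem_preimage]
    by_cases h : x + t ∈ A <;> simp [h]
  rw [h1, ← lintegral_indicator hA _]
  exact (measurePreserving_add_right volume t).lintegral_comp
    ((hf.comp (measurable_sub_const t)).indicator hA)

/-- A finite product of `withDensity` measures over Lebesgue measure is a `withDensity` measure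
over the product Lebesgue measure, with the product density. -/
lemma pi_withDensity (n : ℕ) (g : Fin n → ℝ → ℝ≥0∞) (hg : ∀ i, Measurable (g i))
    (hsf : ∀ i, SigmaFinite (volume.withDensity (g i))) :
    Measure.pi (fun i => volume.withDensity (g i)) =
      (Measure.pi fun _ : Fin n => (volume : Measure ℝ)).withDensity
        (fun x => ∏ i, g i (x i)) := by
  haveI := hsf
  refine Measure.pi_eq fun s hs => ?_
  rw [withDensity_apply _ (MeasurableSet.univ_pi hs)]
  have h1 : ∫⁻ x in Set.pi Set.univ s, ∏ i, g i (x i)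
        ∂(Measure.pi fun _ : Fin n => (volume : Measure ℝ))
      = ∫⁻ x, ∏ i, (s i).indicator (g i) (x i)
        ∂(Measure.pi fun _ : Fin n => (volume : Measure ℝ)) := by
    rw [← lintegral_indicator (MeasurableSet.univ_pi hs) _]
    refine lintegral_congr fun x => ?_
    by_cases h : x ∈ Set.pi Set.univ s
    · rw [Set.indicator_of_mem h]
      exact Finset.prod_congr rfl fun i _ => (Set.indicator_of_mem (h i trivial) _).symm
    · rw [Set.indicator_of_notMem h]
      obtain ⟨j, hj⟩ := not_forall.1 (fun hall => h (fun i _ => hall i))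
      exact (Finset.prod_eq_zero (Finset.mem_univ j) (Set.indicator_of_notMem hj _)).symm
  rw [h1, lintegral_pi_prod n _ (fun i => inferInstance) _ (fun i => (hg i).indicator (hs i))]
  exact Finset.prod_congr rfl fun i _ => by
    rw [lintegral_indicator (hs i) _, withDensity_apply _ (hs i)]

/-- Pushing a finite product of probability measures forward by a coordinatewise translation. -/
lemma pi_map_add (n : ℕ) (μ : Fin n → Measure ℝ) [∀ i, IsProbabilityMeasure (μ i)]
    (a : Fin n → ℝ) :
    (Measure.pi μ).map (· + a) = Measure.pi (fun i => (μ i).map (· + a i)) := by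
  haveI : ∀ i, IsProbabilityMeasure ((μ i).map (· + a i)) :=
    fun i => Measure.isProbabilityMeasure_map (measurable_add_const (a i)).aemeasurable
  refine (Measure.pi_eq fun s hs => ?_).symm
  rw [Measure.map_apply (measurable_add_const a) (MeasurableSet.univ_pi hs)]
  have : (· + a) ⁻¹' Set.pi Set.univ s = Set.pi Set.univ (fun i => (· + a i) ⁻¹' s i) := by
    ext x; simp [Set.mem_pi, Pi.add_apply]
  rw [this, Measure.pi_pi]
  exact Finset.prod_congr rfl fun i _ => by
    rw [Measure.map_apply (measurable_add_const (a i)) (hs i)]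

/-- The law of a vector of jointly independent random variables is the product of the laws. -/
lemma map_vec_eq_pi {Ω : Type*} [MeasurableSpace Ω] (P : Measure Ω) [IsProbabilityMeasure P]
    (n : ℕ) (Z : Fin n → Ω → ℝ) (hmeas : ∀ i, Measurable (Z i))
    (hindep : iIndepFun Z P) :
    P.map (fun ω => fun i => Z i ω) = Measure.pi (fun i => P.map (Z i)) := by
  haveI : ∀ i, IsProbabilityMeasure (P.map (Z i)) :=
    fun i => Measure.isProbabilityMeasure_map (hmeas i).aemeasurable
  refine (Measure.pi_eq fun s hs => ?_).symm
  rw [Measure.map_apply (measurable_pi_lambda _ fun i => hmeas i) (MeasurableSet.univ_pi hs)]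
  have : (fun ω => fun i => Z i ω) ⁻¹' Set.pi Set.univ s = ⋂ i ∈ Finset.univ, Z i ⁻¹' s i := by
    ext ω; simp [Set.mem_pi]
  rw [this, hindep.measure_inter_preimage_eq_mul Finset.univ (fun i _ => hs i)]
  exact Finset.prod_congr rfl fun i _ => (Measure.map_apply (hmeas i) (hs i)).symm

/-- A product of two `withDensity` measures is a `withDensity` measure over the product. -/
lemma prod_withDensity {α β : Type*} [MeasurableSpace α] [MeasurableSpace β]
    (μ : Measure α) (ν : Measure β) [SigmaFinite μ] [SigmaFinite ν]
    (f : α → ℝ≥0∞) (g : β → ℝ≥0∞) (hf : Measurable f) (hg : Measurable g)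
    [SigmaFinite (μ.withDensity f)] [SigmaFinite (ν.withDensity g)] :
    (μ.withDensity f).prod (ν.withDensity g) =
      (μ.prod ν).withDensity (fun p => f p.1 * g p.2) := by
  refine Measure.prod_eq fun s t hs ht => ?_
  rw [withDensity_apply _ (hs.prod ht)]
  have h1 : ∫⁻ p in s ×ˢ t, f p.1 * g p.2 ∂(μ.prod ν)
      = ∫⁻ p : α × β, s.indicator f p.1 * t.indicator g p.2 ∂(μ.prod ν) := by
    rw [← lintegral_indicator (hs.prod ht) _]
    refine lintegral_congr fun p => ?_
    by_cases h : p ∈ s ×ˢ t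
    · rw [Set.indicator_of_mem h, Set.indicator_of_mem h.1, Set.indicator_of_mem h.2]
    · rw [Set.indicator_of_notMem h]
      rcases not_and_or.1 ((Set.mem_prod).not.1 h) with h' | h'
      · rw [Set.indicator_of_notMem h', zero_mul]
      · rw [Set.indicator_of_notMem h', mul_zero]
  rw [h1, lintegral_prod_mul (hf.indicator hs).aemeasurable (hg.indicator ht).aemeasurable,
    lintegral_indicator hs, lintegral_indicator ht,
    ← withDensity_apply _ hs, ← withDensity_apply _ ht]

/-- The event set in the joint-noise space `ℝ × (Fin l → ℝ)`. -/
def svSet (l : ℕ) (hl : 1 ≤ l) (T : Fin l → ℝ) (r : Fin l → ℝ) : Set (ℝ × (Fin l → ℝ)) :=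
  {p | (∀ i : Fin l, (i : ℕ) < l - 1 → r i + p.2 i > T i + p.1) ∧
    r ⟨l - 1, by omega⟩ + p.2 ⟨l - 1, by omega⟩ ≤ T ⟨l - 1, by omega⟩ + p.1}

lemma svSet_measurable (l : ℕ) (hl : 1 ≤ l) (T : Fin l → ℝ) (r : Fin l → ℝ) :
    MeasurableSet (svSet l hl T r) := by
  have : svSet l hl T r =
      (⋂ i : Fin l, ⋂ _ : (i : ℕ) < l - 1, {p : ℝ × (Fin l → ℝ) | T i + p.1 < r i + p.2 i}) ∩
      {p : ℝ × (Fin l → ℝ) |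
        r ⟨l - 1, by omega⟩ + p.2 ⟨l - 1, by omega⟩ ≤ T ⟨l - 1, by omega⟩ + p.1} := by
    ext p
    simp only [svSet, Set.mem_inter_iff, Set.mem_iInter, Set.mem_setOf_eq, gt_iff_lt]
  rw [this]
  refine MeasurableSet.inter ?_ ?_
  · refine MeasurableSet.iInter fun i => MeasurableSet.iInter fun _ => ?_
    exact measurableSet_lt (by fun_prop) (by fun_prop)
  · exact measurableSet_le (by fun_prop) (by fun_prop)

lemma svEpochEvent_eq_preimage {Ω : Type*} (l : ℕ) (T : Fin l → ℝ) (Z : Fin l → Ω → ℝ)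
    (Zα : Ω → ℝ) (hl : 1 ≤ l) (r : Fin l → ℝ) :
    svEpochEvent l T Z Zα hl r = (fun ω => (Zα ω, fun i => Z i ω)) ⁻¹' svSet l hl T r := rfl

theorem sparseVector_single_epoch_privacy {Ω : Type*} [MeasurableSpace Ω] (P : Measure Ω)
    [IsProbabilityMeasure P] (c : ℕ) (hc : 1 ≤ c) (ε η : ℝ) (hε : 0 < ε) (hη : 0 < η)
    (l : ℕ) (hl : 1 ≤ l) (T : Fin l → ℝ)
    (Zα : Ω → ℝ) (Z : Fin l → Ω → ℝ)
    (hZα : HasLaplaceLaw P Zα (2 * η * c / ε))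
    (hZ : ∀ i : Fin l, HasLaplaceLaw P (Z i) (4 * η * c / ε))
    (hZindep : iIndepFun Z P)
    (hαindep : IndepFun Zα (fun ω => (fun i : Fin l => Z i ω)) P)
    (q q' : Fin l → ℝ) (hqq' : ∀ i : Fin l, |q i - q' i| ≤ η) :
    P (svEpochEvent l T Z Zα hl q) ≤
      ENNReal.ofReal (Real.exp (ε / c)) * P (svEpochEvent l T Z Zα hl q') := by
  obtain ⟨hZαm, hZαlaw⟩ := hZα
  have hZm : ∀ i, Measurable (Z i) := fun i => (hZ i).1
  have hc0 : (0 : ℝ) < c := by exact_mod_cast Nat.lt_of_lt_of_le Nat.zero_lt_one hc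
  set b₁ : ℝ := 2 * η * c / ε with hb₁def
  set b₂ : ℝ := 4 * η * c / ε with hb₂def
  have hb₁ : 0 < b₁ := by rw [hb₁def]; positivity
  have hb₂ : 0 < b₂ := by rw [hb₂def]; positivity
  have hZαlaw' : P.map Zα = volume.withDensity (laplaceDensity b₁) := hZαlaw
  have hZlaw' : ∀ i, P.map (Z i) = volume.withDensity (laplaceDensity b₂) := fun i => (hZ i).2
  have hf₁m := laplaceDensity_measurable b₁
  have hf₂m := laplaceDensity_measurable b₂
  -- notation
  set j : Fin l := ⟨l - 1, by omega⟩ with hjdef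
  set av : Fin l → ℝ := fun i => if i = j then q j - q' j - η else 0 with havdef
  set C₁ : ℝ≥0∞ := ENNReal.ofReal (Real.exp (η / b₁)) with hC₁def
  set C₂ : ℝ≥0∞ := ENNReal.ofReal (Real.exp (2 * η / b₂)) with hC₂def
  set V : Ω → ℝ × (Fin l → ℝ) := fun ω => (Zα ω, fun i => Z i ω) with hVdef
  have hvecm : Measurable (fun ω => fun i : Fin l => Z i ω) :=
    measurable_pi_lambda _ fun i => hZm i
  have hVm : Measurable V := hZαm.prodMk hvecm
  set ν₁ : Measure ℝ := P.map Zα with hν₁def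
  set ν₂ : Measure (Fin l → ℝ) := P.map (fun ω => fun i : Fin l => Z i ω) with hν₂def
  set μ : Measure (ℝ × (Fin l → ℝ)) := P.map V with hμdef
  set piVol : Measure (Fin l → ℝ) := Measure.pi (fun _ : Fin l => (volume : Measure ℝ))
    with hpiVoldef
  haveI : IsProbabilityMeasure ν₁ := Measure.isProbabilityMeasure_map hZαm.aemeasurable
  haveI : IsProbabilityMeasure ν₂ := Measure.isProbabilityMeasure_map hvecm.aemeasurable
  haveI hPZi : ∀ i : Fin l, IsProbabilityMeasure (P.map (Z i)) :=
    fun i => Measure.isProbabilityMeasure_map (hZm i).aemeasurable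
  -- probability instances for the densities
  have hwd₂eq : ∀ t : ℝ, volume.withDensity (fun x => laplaceDensity b₂ (x - t))
      = (P.map (Z j)).map (· + t) := fun t => by
    rw [hZlaw' j, withDensity_map_add _ hf₂m t]
  haveI hwd₂prob : ∀ t : ℝ,
      IsProbabilityMeasure (volume.withDensity (fun x => laplaceDensity b₂ (x - t))) := fun t => by
    rw [hwd₂eq t]
    exact Measure.isProbabilityMeasure_map (measurable_add_const t).aemeasurable
  haveI hwd₂prob' : IsProbabilityMeasure (volume.withDensity (laplaceDensity b₂)) :=
    hZlaw' j ▸ hPZi j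
  haveI hwd₁prob : IsProbabilityMeasure (volume.withDensity (laplaceDensity b₁)) :=
    hZαlaw' ▸ (inferInstance : IsProbabilityMeasure ν₁)
  have hwd₁eq : volume.withDensity (fun x => laplaceDensity b₁ (x - (-η)))
      = ν₁.map (· + (-η)) := by
    rw [hZαlaw', withDensity_map_add _ hf₁m (-η)]
  haveI hwd₁prob' :
      IsProbabilityMeasure (volume.withDensity (fun x => laplaceDensity b₁ (x - (-η)))) := by
    rw [hwd₁eq]
    exact Measure.isProbabilityMeasure_map (measurable_add_const (-η)).aemeasurable
  -- the joint law
  have e1 : μ = ν₁.prod ν₂ :=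
    (indepFun_iff_map_prod_eq_prod_map_map hZαm.aemeasurable hvecm.aemeasurable).1 hαindep
  have hν₂pi : ν₂ = Measure.pi (fun i => P.map (Z i)) := map_vec_eq_pi P l Z hZm hZindep
  -- the translation map
  set τ : ℝ × (Fin l → ℝ) → ℝ × (Fin l → ℝ) :=
    Prod.map (· + (-η)) (· + av) with hτdef
  have hτm : Measurable τ := (measurable_add_const (-η)).prodMap (measurable_add_const av)
  -- image laws under translation
  have e3 : ν₁.map (· + (-η)) = volume.withDensity (fun z => laplaceDensity b₁ (z - (-η))) := by
    rw [hZαlaw', withDensity_map_add _ hf₁m (-η)]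
  have e4 : ν₂.map (· + av) = piVol.withDensity (fun x => ∏ i, laplaceDensity b₂ (x i - av i)) := by
    rw [hν₂pi, pi_map_add l _ av]
    have h : (fun i => (P.map (Z i)).map (· + av i))
        = fun i => volume.withDensity (fun x => laplaceDensity b₂ (x - av i)) :=
      funext fun i => by rw [hZlaw' i, withDensity_map_add _ hf₂m (av i)]
    rw [h]
    exact pi_withDensity l _ (fun i => hf₂m.comp (measurable_sub_const (av i)))
      (fun i => by haveI := hwd₂prob (av i); infer_instance)
  have e6 : ν₂ = piVol.withDensity (fun x => ∏ i, laplaceDensity b₂ (x i)) := by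
    rw [hν₂pi]
    have h : (fun i : Fin l => P.map (Z i)) = fun _ => volume.withDensity (laplaceDensity b₂) :=
      funext fun i => hZlaw' i
    rw [h]
    exact pi_withDensity l _ (fun _ => hf₂m) (fun _ => by haveI := hwd₂prob'; infer_instance)
  -- probability instances for the pi withDensity measures (for prod_withDensity)
  haveI : SigmaFinite (piVol.withDensity (fun x => ∏ i, laplaceDensity b₂ (x i - av i))) := by
    rw [← pi_withDensity l (fun i x => laplaceDensity b₂ (x - av i))
      (fun i => hf₂m.comp (measurable_sub_const (av i)))
      (fun i => by haveI := hwd₂prob (av i); infer_instance)]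
    infer_instance
  haveI : SigmaFinite (piVol.withDensity (fun x => ∏ i, laplaceDensity b₂ (x i))) := by
    rw [← e6]; infer_instance
  -- collapse to a single density over the product Lebesgue measure
  have ebig : μ.map τ = (volume.prod piVol).withDensity
      (fun p => laplaceDensity b₁ (p.1 - (-η)) * ∏ i, laplaceDensity b₂ (p.2 i - av i)) := by
    rw [e1, hτdef,
      ← Measure.map_prod_map _ _ (measurable_add_const (-η)) (measurable_add_const av),
      e3, e4]
    exact prod_withDensity _ _ _ _ (hf₁m.comp (measurable_sub_const (-η)))
      (Finset.measurable_prod _ fun i _ => by exact hf₂m.comp ((measurable_pi_apply i).sub_const _))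
  have emu : μ = (volume.prod piVol).withDensity
      (fun p => laplaceDensity b₁ p.1 * ∏ i, laplaceDensity b₂ (p.2 i)) := by
    rw [e1, hZαlaw', e6]
    exact prod_withDensity _ _ _ _ hf₁m
      (Finset.measurable_prod _ fun i _ => hf₂m.comp (measurable_pi_apply i))
  -- pointwise density bound
  have havj : av j = q j - q' j - η := if_pos rfl
  have havne : ∀ i, i ≠ j → av i = 0 := fun i hi => if_neg hi
  have havjabs : |av j| ≤ 2 * η := by
    have := abs_le.1 (hqq' j)
    rw [havj]
    exact abs_le.2 ⟨by linarith, by linarith⟩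
  have hpt : ∀ p : ℝ × (Fin l → ℝ),
      laplaceDensity b₁ (p.1 - (-η)) * ∏ i, laplaceDensity b₂ (p.2 i - av i) ≤
      (C₁ * C₂) * (laplaceDensity b₁ p.1 * ∏ i, laplaceDensity b₂ (p.2 i)) := by
    intro p
    have h1 : laplaceDensity b₁ (p.1 - (-η)) ≤ C₁ * laplaceDensity b₁ p.1 := by
      rw [hC₁def]
      exact laplaceDensity_shift b₁ hb₁ (-η) η p.1 (by rw [abs_neg, abs_of_pos hη])
    have h2 : ∏ i, laplaceDensity b₂ (p.2 i - av i) ≤ C₂ * ∏ i, laplaceDensity b₂ (p.2 i) := by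
      rw [← Finset.mul_prod_erase Finset.univ (fun i => laplaceDensity b₂ (p.2 i - av i))
        (Finset.mem_univ j),
        ← Finset.mul_prod_erase Finset.univ (fun i => laplaceDensity b₂ (p.2 i))
        (Finset.mem_univ j)]
      have herase : ∏ i ∈ Finset.univ.erase j, laplaceDensity b₂ (p.2 i - av i)
          = ∏ i ∈ Finset.univ.erase j, laplaceDensity b₂ (p.2 i) :=
        Finset.prod_congr rfl fun i hi => by
          rw [havne i (Finset.mem_erase.1 hi).1, sub_zero]
      rw [herase, ← mul_assoc]
      refine mul_le_mul_left ?_ _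
      rw [hC₂def]
      exact laplaceDensity_shift b₂ hb₂ (av j) (2 * η) (p.2 j) havjabs
    calc laplaceDensity b₁ (p.1 - (-η)) * ∏ i, laplaceDensity b₂ (p.2 i - av i)
        ≤ (C₁ * laplaceDensity b₁ p.1) * (C₂ * ∏ i, laplaceDensity b₂ (p.2 i)) :=
          mul_le_mul' h1 h2
      _ = (C₁ * C₂) * (laplaceDensity b₁ p.1 * ∏ i, laplaceDensity b₂ (p.2 i)) := by ring
  -- the constant
  have hC : C₁ * C₂ = ENNReal.ofReal (Real.exp (ε / c)) := by
    rw [hC₁def, hC₂def, ← ENNReal.ofReal_mul (Real.exp_nonneg _), ← Real.exp_add]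
    congr 1
    rw [hb₁def, hb₂def]
    have hη0 : η ≠ 0 := ne_of_gt hη
    have hε0 : ε ≠ 0 := ne_of_gt hε
    have hc0' : (c : ℝ) ≠ 0 := ne_of_gt hc0
    field_simp
    ring
  -- the translated law is dominated
  have hmle : μ.map τ ≤ ENNReal.ofReal (Real.exp (ε / c)) • μ := by
    rw [ebig, emu, ← hC]
    calc (volume.prod piVol).withDensity
          (fun p => laplaceDensity b₁ (p.1 - (-η)) * ∏ i, laplaceDensity b₂ (p.2 i - av i))
        ≤ (volume.prod piVol).withDensity
          ((C₁ * C₂) • fun p => laplaceDensity b₁ p.1 * ∏ i, laplaceDensity b₂ (p.2 i)) := by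
          refine withDensity_mono (ae_of_all _ fun p => ?_)
          exact hpt p
      _ = (C₁ * C₂) • (volume.prod piVol).withDensity
          (fun p => laplaceDensity b₁ p.1 * ∏ i, laplaceDensity b₂ (p.2 i)) :=
          withDensity_smul' (C₁ * C₂) _
            (ENNReal.mul_ne_top ENNReal.ofReal_ne_top ENNReal.ofReal_ne_top)
  -- inclusion under translation
  have hincl : svSet l hl T q ⊆ τ ⁻¹' svSet l hl T q' := by
    intro p hp
    obtain ⟨h1, h2⟩ := hp
    constructor
    · intro i hi
      have hij : i ≠ j := by
        intro h
        rw [h, hjdef] at hi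
        simp only at hi
        omega
      have havi : av i = 0 := havne i hij
      have hgt := h1 i hi
      have hq := abs_le.1 (hqq' i)
      show q' i + (p.2 + av) i > T i + (p.1 + (-η))
      simp only [Pi.add_apply, havi, add_zero]
      linarith [hgt]
    · show q' j + (p.2 + av) j ≤ T j + (p.1 + (-η))
      simp only [Pi.add_apply, havj]
      have h2' : q j + p.2 j ≤ T j + p.1 := h2
      linarith
  -- conclusion
  have hμeq : ∀ r : Fin l → ℝ, P (svEpochEvent l T Z Zα hl r) = μ (svSet l hl T r) := by
    intro r
    rw [svEpochEvent_eq_preimage, hμdef, Measure.map_apply hVm (svSet_measurable l hl T r)]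
  calc P (svEpochEvent l T Z Zα hl q) = μ (svSet l hl T q) := hμeq q
    _ ≤ μ (τ ⁻¹' svSet l hl T q') := measure_mono hincl
    _ = (μ.map τ) (svSet l hl T q') :=
        (Measure.map_apply hτm (svSet_measurable l hl T q')).symm
    _ ≤ (ENNReal.ofReal (Real.exp (ε / c)) • μ) (svSet l hl T q') :=
        Measure.le_iff'.1 hmle _
    _ = ENNReal.ofReal (Real.exp (ε / c)) * μ (svSet l hl T q') := by
        simp [Measure.smul_apply, smul_eq_mul]
    _ = ENNReal.ofReal (Real.exp (ε / c)) * P (svEpochEvent l T Z Zα hl q') := by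
        rw [hμeq q']
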